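/- Let ℓ, m ∈ ℤ≥1 and a ∈ ℂ∖{0}. Every nonzero subspace of V(ℓ,a) ⊗ V(m) invariant under all five operators Δ(E₀⁺), Δ(E₁⁺), Δ(E₁⁻), Δ(K₀), Δ(K₁) contains the vector x̃_{ℓ+m} = [ℓ]![m]! v_ℓ ⊗ v'_m (the lowest weight vector). -/

import Mathlib

open scoped TensorProduct

noncomputable section

/-- The `q`-integer `[t] = (q^t - q^(-t))/(q - q⁻¹)`. -/
def qnum (q : ℂ) (t : ℤ) : ℂ := (q ^ t - q ^ (-t)) / (q - q⁻¹)

/-- The `q`-factorial `[t]! = [t][t-1]⋯[1]`. -/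
def qfac (q : ℂ) (t : ℕ) : ℂ := ∏ k ∈ Finset.range t, qnum q ((k : ℤ) + 1)

/-- Commutator `[X,Y] = XY - YX`. -/
def brk {V : Type*} [AddCommGroup V] [Module ℂ V] (X Y : Module.End ℂ V) :
    Module.End ℂ V := X * Y - Y * X

/-- `q`-commutator `[X,Y]_t = t XY - t⁻¹ YX`. -/
def brkq {V : Type*} [AddCommGroup V] [Module ℂ V] (t : ℂ) (X Y : Module.End ℂ V) :
    Module.End ℂ V := t • (X * Y) - t⁻¹ • (Y * X)

/-- A `U'_q(L(sl₂))`-module structure on a complex vector space `V`: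
operators `(E₀⁺, E₁⁺, E₁⁻, K₀, K₁)` with `K₀, K₁` mutually inverse (hence invertible) and
the defining relations; `K₀ = K₁⁻¹` throughout. -/
structure IsUqpRep (q : ℂ) {V : Type*} [AddCommGroup V] [Module ℂ V]
    (E0 E1p E1m K0 K1 : Module.End ℂ V) : Prop where
  K0K1 : K0 * K1 = 1
  K1K0 : K1 * K0 = 1
  K0E0 : K0 * E0 = q ^ 2 • (E0 * K0)
  K1E1p : K1 * E1p = q ^ 2 • (E1p * K1)
  K1E1m : K1 * E1m = (q ^ 2)⁻¹ • (E1m * K1)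
  K1E0 : K1 * E0 = (q ^ 2)⁻¹ • (E0 * K1)
  K0E1p : K0 * E1p = (q ^ 2)⁻¹ • (E1p * K0)
  K0E1m : K0 * E1m = q ^ 2 • (E1m * K0)
  e1comm : E1p * E1m - E1m * E1p = (q - q⁻¹)⁻¹ • (K1 - K0)
  e0e1m : E0 * E1m = E1m * E0
  serre01 : brk E0 (brkq q⁻¹ E0 (brkq q E0 E1p)) = 0
  serre10 : brk E1p (brkq q⁻¹ E1p (brkq q E1p E0)) = 0

/-- `K₀` of the evaluation module `V(ℓ,a)`: `K₀ vᵢ = q^(2i-ℓ) vᵢ`. -/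
def evalK0 (q : ℂ) (ℓ : ℕ) : Module.End ℂ (Fin (ℓ + 1) → ℂ) :=
  (Matrix.diagonal fun i : Fin (ℓ + 1) => q ^ (2 * (i : ℤ) - ℓ)).mulVecLin

/-- `K₁` of the evaluation module `V(ℓ,a)`: `K₁ vᵢ = q^(ℓ-2i) vᵢ`. -/
def evalK1 (q : ℂ) (ℓ : ℕ) : Module.End ℂ (Fin (ℓ + 1) → ℂ) :=
  (Matrix.diagonal fun i : Fin (ℓ + 1) => q ^ ((ℓ : ℤ) - 2 * i)).mulVecLin

/-- `E₀⁺` of the evaluation module `V(ℓ,a)`: `E₀⁺ vᵢ = a q [i+1] vᵢ₊₁`. -/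
def evalE0 (q a : ℂ) (ℓ : ℕ) : Module.End ℂ (Fin (ℓ + 1) → ℂ) :=
  (Matrix.of fun j i : Fin (ℓ + 1) =>
    if (j : ℕ) = (i : ℕ) + 1 then a * q * qnum q ((i : ℤ) + 1) else 0).mulVecLin

/-- `E₁⁺` of the evaluation module `V(ℓ,a)`: `E₁⁺ vᵢ = [ℓ-i+1] vᵢ₋₁`. -/
def evalE1p (q : ℂ) (ℓ : ℕ) : Module.End ℂ (Fin (ℓ + 1) → ℂ) :=
  (Matrix.of fun j i : Fin (ℓ + 1) =>
    if (i : ℕ) = (j : ℕ) + 1 then qnum q ((ℓ : ℤ) - (i : ℤ) + 1) else 0).mulVecLin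

/-- `E₁⁻` of the evaluation module `V(ℓ,a)`: `E₁⁻ vᵢ = [i+1] vᵢ₊₁`. -/
def evalE1m (q : ℂ) (ℓ : ℕ) : Module.End ℂ (Fin (ℓ + 1) → ℂ) :=
  (Matrix.of fun j i : Fin (ℓ + 1) =>
    if (j : ℕ) = (i : ℕ) + 1 then qnum q ((i : ℤ) + 1) else 0).mulVecLin

/-- Irreducibility: the only subspaces invariant under all five operators are `⊥` and `⊤`. -/
def IsIrred {V : Type*} [AddCommGroup V] [Module ℂ V]
    (E0 E1p E1m K0 K1 : Module.End ℂ V) : Prop :=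
  ∀ W : Submodule ℂ V, (∀ v ∈ W, E0 v ∈ W) → (∀ v ∈ W, E1p v ∈ W) →
    (∀ v ∈ W, E1m v ∈ W) → (∀ v ∈ W, K0 v ∈ W) → (∀ v ∈ W, K1 v ∈ W) →
    W = ⊥ ∨ W = ⊤

/-- Type `(1,1)`: `K₀` is diagonalizable with all eigenvalues of the form `q^(2i-d)`,
`0 ≤ i ≤ d`, i.e. the corresponding eigenspaces span. -/
def IsType11 (q : ℂ) {V : Type*} [AddCommGroup V] [Module ℂ V] (K0 : Module.End ℂ V) : Prop :=
  ∃ d : ℕ, ⨆ i : Fin (d + 1), Module.End.eigenspace K0 (q ^ (2 * (i : ℤ) - d)) = ⊤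

/-- `Δ(K₀) = K₀ ⊗ K₀` on `V(ℓ,a) ⊗ V(m,b)`. -/
def dK0 (q : ℂ) (ℓ m : ℕ) :
    Module.End ℂ (TensorProduct ℂ (Fin (ℓ + 1) → ℂ) (Fin (m + 1) → ℂ)) :=
  TensorProduct.map (evalK0 q ℓ) (evalK0 q m)

/-- `Δ(K₁) = K₁ ⊗ K₁` on `V(ℓ,a) ⊗ V(m,b)`. -/
def dK1 (q : ℂ) (ℓ m : ℕ) :
    Module.End ℂ (TensorProduct ℂ (Fin (ℓ + 1) → ℂ) (Fin (m + 1) → ℂ)) :=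
  TensorProduct.map (evalK1 q ℓ) (evalK1 q m)

/-- `Δ(E₀⁺) = K₀ ⊗ E₀⁺ + E₀⁺ ⊗ 1` on `V(ℓ,a) ⊗ V(m,b)`. -/
def dE0 (q : ℂ) (ℓ m : ℕ) (a b : ℂ) :
    Module.End ℂ (TensorProduct ℂ (Fin (ℓ + 1) → ℂ) (Fin (m + 1) → ℂ)) :=
  TensorProduct.map (evalK0 q ℓ) (evalE0 q b m) +
    TensorProduct.map (evalE0 q a ℓ) LinearMap.id

/-- `Δ(E₁⁺) = K₁ ⊗ E₁⁺ + E₁⁺ ⊗ 1` on `V(ℓ,a) ⊗ V(m,b)`. -/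
def dE1p (q : ℂ) (ℓ m : ℕ) :
    Module.End ℂ (TensorProduct ℂ (Fin (ℓ + 1) → ℂ) (Fin (m + 1) → ℂ)) :=
  TensorProduct.map (evalK1 q ℓ) (evalE1p q m) +
    TensorProduct.map (evalE1p q ℓ) LinearMap.id

/-- `Δ(E₁⁻) = 1 ⊗ E₁⁻ + E₁⁻ ⊗ K₁⁻¹` on `V(ℓ,a) ⊗ V(m,b)` (note `K₁⁻¹ = K₀`). -/
def dE1m (q : ℂ) (ℓ m : ℕ) :
    Module.End ℂ (TensorProduct ℂ (Fin (ℓ + 1) → ℂ) (Fin (m + 1) → ℂ)) :=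
  TensorProduct.map LinearMap.id (evalE1m q m) +
    TensorProduct.map (evalE1m q ℓ) (evalK0 q m)

/-- A linear map intertwines the five structure operators of two
`U'_q(L(sl₂))`-module structures. -/
def IntertwinesAll {V W : Type*} [AddCommGroup V] [Module ℂ V] [AddCommGroup W] [Module ℂ W]
    (σ : V →ₗ[ℂ] W) (A0 A1p A1m AK0 AK1 : Module.End ℂ V)
    (B0 B1p B1m BK0 BK1 : Module.End ℂ W) : Prop :=
  σ ∘ₗ A0 = B0 ∘ₗ σ ∧ σ ∘ₗ A1p = B1p ∘ₗ σ ∧ σ ∘ₗ A1m = B1m ∘ₗ σ ∧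
    σ ∘ₗ AK0 = BK0 ∘ₗ σ ∧ σ ∘ₗ AK1 = BK1 ∘ₗ σ


section Aux

variable {q : ℂ}

lemma qnum_succ_ne_zero (hq0 : q ≠ 0) (hq : ∀ n : ℕ, 0 < n → q ^ n ≠ 1) (n : ℕ) :
    qnum q ((n : ℤ) + 1) ≠ 0 := by
  have hden : q - q⁻¹ ≠ 0 := by
    intro h
    have h' : q = q⁻¹ := sub_eq_zero.mp h
    have hq2 : q * q = 1 := by
      have h2 : q * q = q * q⁻¹ := by rw [← h']
      rw [h2, mul_inv_cancel₀ hq0]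
    exact hq 2 (by norm_num) (by rw [pow_two]; exact hq2)
  have hnum : q ^ ((n : ℤ) + 1) - q ^ (-((n : ℤ) + 1)) ≠ 0 := by
    intro h
    have heq : q ^ ((n : ℤ) + 1) = q ^ (-((n : ℤ) + 1)) := sub_eq_zero.mp h
    have h1 : q ^ ((n : ℤ) + 1) * q ^ (-((n : ℤ) + 1)) = 1 := by
      rw [← zpow_add₀ hq0, show (n : ℤ) + 1 + -((n : ℤ) + 1) = 0 by ring, zpow_zero]
    rw [← heq] at h1
    have h2 : q ^ (2 * n + 2 : ℕ) = 1 := by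
      have hcast : ((2 * n + 2 : ℕ) : ℤ) = ((n : ℤ) + 1) + ((n : ℤ) + 1) := by push_cast; ring
      rw [← zpow_natCast q, hcast, zpow_add₀ hq0, h1]
    exact hq (2 * n + 2) (by omega) h2
  exact div_ne_zero hnum hden

/-- Coordinate extraction on the first tensor factor. -/
def coordT (ℓ m : ℕ) (i : Fin (ℓ + 1)) :
    TensorProduct ℂ (Fin (ℓ + 1) → ℂ) (Fin (m + 1) → ℂ) →ₗ[ℂ] (Fin (m + 1) → ℂ) :=
  (TensorProduct.lid ℂ _).toLinearMap ∘ₗ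
    TensorProduct.map (LinearMap.proj i) LinearMap.id

@[simp] lemma coordT_tmul (ℓ m : ℕ) (i : Fin (ℓ + 1)) (x : Fin (ℓ + 1) → ℂ)
    (y : Fin (m + 1) → ℂ) : coordT ℓ m i (x ⊗ₜ[ℂ] y) = x i • y := by
  simp [coordT]

lemma sum_coordT (ℓ m : ℕ) (w : TensorProduct ℂ (Fin (ℓ + 1) → ℂ) (Fin (m + 1) → ℂ)) :
    ∑ i : Fin (ℓ + 1), (Pi.single i (1 : ℂ)) ⊗ₜ[ℂ] coordT ℓ m i w = w := by
  induction w using TensorProduct.induction_on with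
  | zero => simp
  | tmul x y =>
      have key : ∀ i : Fin (ℓ + 1),
          (Pi.single i (1 : ℂ)) ⊗ₜ[ℂ] coordT ℓ m i (x ⊗ₜ[ℂ] y)
            = (Pi.single i (x i) : Fin (ℓ + 1) → ℂ) ⊗ₜ[ℂ] y := by
        intro i
        rw [coordT_tmul, TensorProduct.tmul_smul, TensorProduct.smul_tmul',
          ← Pi.single_smul, smul_eq_mul, mul_one]
      rw [Finset.sum_congr rfl fun i _ => key i, ← TensorProduct.sum_tmul,
        Finset.univ_sum_single]
  | add u v hu hv =>
      simp only [map_add, TensorProduct.tmul_add, Finset.sum_add_distrib]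
      rw [hu, hv]

lemma evalE0_coord_succ (a : ℂ) (ℓ n : ℕ) (hn : n < ℓ) (x : Fin (ℓ + 1) → ℂ) :
    evalE0 q a ℓ x ⟨n + 1, by omega⟩ =
      (a * q * qnum q ((n : ℤ) + 1)) * x ⟨n, by omega⟩ := by
  simp only [evalE0, Matrix.mulVecLin_apply, Matrix.mulVec, dotProduct, Matrix.of_apply]
  rw [Finset.sum_eq_single (⟨n, by omega⟩ : Fin (ℓ + 1))]
  · simp
  · intro b _ hb
    have hc : ¬ ((n + 1 : ℕ) = (b : ℕ) + 1) := by
      intro hc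
      exact hb (Fin.ext (show (b : ℕ) = n by omega))
    simp only [hc, if_false, zero_mul]
  · simp

lemma evalE0_coord_zero (a : ℂ) (ℓ : ℕ) (x : Fin (ℓ + 1) → ℂ) :
    evalE0 q a ℓ x ⟨0, by omega⟩ = 0 := by
  simp only [evalE0, Matrix.mulVecLin_apply, Matrix.mulVec, dotProduct, Matrix.of_apply]
  apply Finset.sum_eq_zero
  intro b _
  simp

lemma evalE1m_coord_succ (ℓ n : ℕ) (hn : n < ℓ) (x : Fin (ℓ + 1) → ℂ) :
    evalE1m q ℓ x ⟨n + 1, by omega⟩ = qnum q ((n : ℤ) + 1) * x ⟨n, by omega⟩ := by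
  simp only [evalE1m, Matrix.mulVecLin_apply, Matrix.mulVec, dotProduct, Matrix.of_apply]
  rw [Finset.sum_eq_single (⟨n, by omega⟩ : Fin (ℓ + 1))]
  · simp
  · intro b _ hb
    have hc : ¬ ((n + 1 : ℕ) = (b : ℕ) + 1) := by
      intro hc
      exact hb (Fin.ext (show (b : ℕ) = n by omega))
    simp only [hc, if_false, zero_mul]
  · simp

lemma evalE1m_coord_zero (ℓ : ℕ) (x : Fin (ℓ + 1) → ℂ) :
    evalE1m q ℓ x ⟨0, by omega⟩ = 0 := by
  simp only [evalE1m, Matrix.mulVecLin_apply, Matrix.mulVec, dotProduct, Matrix.of_apply]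
  apply Finset.sum_eq_zero
  intro b _
  simp

lemma evalE1m_single_last (ℓ : ℕ) :
    evalE1m q ℓ (Pi.single (Fin.last ℓ) (1 : ℂ)) = 0 := by
  funext j
  simp only [evalE1m, Matrix.mulVecLin_apply, Matrix.mulVec_single_one, Matrix.col_apply, mul_one, Matrix.of_apply,
    Pi.zero_apply]
  rw [if_neg]
  simp only [Fin.val_last]
  omega

lemma dE0_zero (ℓ m : ℕ) (a : ℂ) :
    dE0 q ℓ m a 0 = TensorProduct.map (evalE0 q a ℓ) LinearMap.id := by
  have h0 : evalE0 q (0 : ℂ) m = 0 := by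
    have hM : (Matrix.of fun j i : Fin (m + 1) =>
        if (j : ℕ) = (i : ℕ) + 1 then (0 : ℂ) * q * qnum q ((i : ℤ) + 1) else 0) = 0 := by
      ext j i
      simp [ite_eq_right_iff]
    rw [evalE0, hM, Matrix.mulVecLin_zero]
  rw [dE0, h0, TensorProduct.map_zero_right, zero_add]

lemma coordT_dE0_succ (ℓ m n : ℕ) (hn : n < ℓ) (a : ℂ)
    (w : TensorProduct ℂ (Fin (ℓ + 1) → ℂ) (Fin (m + 1) → ℂ)) :
    coordT ℓ m ⟨n + 1, by omega⟩ (dE0 q ℓ m a 0 w) =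
      (a * q * qnum q ((n : ℤ) + 1)) • coordT ℓ m ⟨n, by omega⟩ w := by
  rw [dE0_zero]
  induction w using TensorProduct.induction_on with
  | zero => simp
  | tmul x y =>
      rw [TensorProduct.map_tmul, coordT_tmul, coordT_tmul, LinearMap.id_apply,
        evalE0_coord_succ a ℓ n hn, mul_smul]
  | add u v hu hv => simp only [map_add, smul_add, hu, hv]

lemma coordT_dE0_zero (ℓ m : ℕ) (a : ℂ)
    (w : TensorProduct ℂ (Fin (ℓ + 1) → ℂ) (Fin (m + 1) → ℂ)) :
    coordT ℓ m ⟨0, by omega⟩ (dE0 q ℓ m a 0 w) = 0 := by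
  rw [dE0_zero]
  induction w using TensorProduct.induction_on with
  | zero => simp
  | tmul x y =>
      rw [TensorProduct.map_tmul, coordT_tmul, LinearMap.id_apply, evalE0_coord_zero, zero_smul]
  | add u v hu hv => rw [map_add, map_add, hu, hv, add_zero]

lemma dE1m_last_tmul (ℓ m : ℕ) (u : Fin (m + 1) → ℂ) :
    dE1m q ℓ m ((Pi.single (Fin.last ℓ) (1 : ℂ)) ⊗ₜ[ℂ] u) =
      (Pi.single (Fin.last ℓ) (1 : ℂ)) ⊗ₜ[ℂ] evalE1m q m u := by
  rw [dE1m]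
  simp [TensorProduct.map_tmul, evalE1m_single_last, TensorProduct.zero_tmul]

end Aux

section Main

variable {q : ℂ}

lemma step2 (hq0 : q ≠ 0) (hq : ∀ n : ℕ, 0 < n → q ^ n ≠ 1)
    (ℓ m : ℕ) (a : ℂ) (ha : a ≠ 0)
    (W : Submodule ℂ (TensorProduct ℂ (Fin (ℓ + 1) → ℂ) (Fin (m + 1) → ℂ)))
    (hE0 : ∀ v ∈ W, dE0 q ℓ m a 0 v ∈ W) :
    ∀ k : ℕ, ∀ w ∈ W, w ≠ 0 →
      (∀ i : Fin (ℓ + 1), (i : ℕ) < ℓ - k → coordT ℓ m i w = 0) →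
      ∃ u : Fin (m + 1) → ℂ, u ≠ 0 ∧ (Pi.single (Fin.last ℓ) (1 : ℂ)) ⊗ₜ[ℂ] u ∈ W := by
  intro k
  induction k with
  | zero =>
      intro w hwW hw0 hvan
      have hw : w = (Pi.single (Fin.last ℓ) (1 : ℂ)) ⊗ₜ[ℂ] coordT ℓ m (Fin.last ℓ) w := by
        conv_lhs => rw [← sum_coordT ℓ m w]
        rw [Finset.sum_eq_single (Fin.last ℓ)]
        · intro b _ hb
          have hbℓ : (b : ℕ) < ℓ := by
            have h1 : (b : ℕ) ≠ ℓ := fun h => hb (Fin.ext h)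
            have h2 := b.isLt
            omega
          rw [hvan b (by omega), TensorProduct.tmul_zero]
        · intro h
          exact absurd (Finset.mem_univ _) h
      refine ⟨coordT ℓ m (Fin.last ℓ) w, ?_, ?_⟩
      · intro h0
        apply hw0
        rw [hw, h0, TensorProduct.tmul_zero]
      · rw [← hw]; exact hwW
  | succ k ih =>
      intro w hwW hw0 hvan
      by_cases hall : ∀ i : Fin (ℓ + 1), (i : ℕ) < ℓ - k → coordT ℓ m i w = 0
      · exact ih w hwW hw0 hall
      · push_neg at hall
        obtain ⟨i, hi, hne⟩ := hall
        have h1 : ¬ ((i : ℕ) < ℓ - (k + 1)) := fun h => hne (hvan i h)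
        have hkℓ : k < ℓ := by omega
        set n : ℕ := ℓ - k - 1 with hn_def
        have hn : n < ℓ := by omega
        have hiv : (i : ℕ) = n := by omega
        have hieq : i = ⟨n, by omega⟩ := Fin.ext hiv
        have hc : a * q * qnum q ((n : ℤ) + 1) ≠ 0 :=
          mul_ne_zero (mul_ne_zero ha hq0) (qnum_succ_ne_zero hq0 hq n)
        have hw'W : dE0 q ℓ m a 0 w ∈ W := hE0 w hwW
        have hsucc := coordT_dE0_succ (q := q) ℓ m n hn a w
        have hw'ne : dE0 q ℓ m a 0 w ≠ 0 := by
          intro h0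
          rw [h0, map_zero] at hsucc
          apply hne
          rw [hieq]
          rcases smul_eq_zero.mp hsucc.symm with h | h
          · exact absurd h hc
          · exact h
        have hvan' : ∀ j : Fin (ℓ + 1), (j : ℕ) < ℓ - k →
            coordT ℓ m j (dE0 q ℓ m a 0 w) = 0 := by
          intro j hj
          rcases Nat.eq_zero_or_pos (j : ℕ) with h0 | hpos
          · have : j = ⟨0, by omega⟩ := Fin.ext h0
            rw [this]
            exact coordT_dE0_zero ℓ m a w
          · obtain ⟨p, hp⟩ : ∃ p, (j : ℕ) = p + 1 := ⟨(j : ℕ) - 1, by omega⟩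
            have hpℓ : p < ℓ := by omega
            have : j = ⟨p + 1, by omega⟩ := Fin.ext hp
            rw [this, coordT_dE0_succ (q := q) ℓ m p hpℓ a w,
              hvan ⟨p, by omega⟩ (show p < ℓ - (k + 1) by omega), smul_zero]
        exact ih _ hw'W hw'ne hvan'

lemma step3 (hq0 : q ≠ 0) (hq : ∀ n : ℕ, 0 < n → q ^ n ≠ 1)
    (ℓ m : ℕ)
    (W : Submodule ℂ (TensorProduct ℂ (Fin (ℓ + 1) → ℂ) (Fin (m + 1) → ℂ)))
    (hE1m : ∀ v ∈ W, dE1m q ℓ m v ∈ W) :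
    ∀ k : ℕ, ∀ u : Fin (m + 1) → ℂ, u ≠ 0 →
      (Pi.single (Fin.last ℓ) (1 : ℂ)) ⊗ₜ[ℂ] u ∈ W →
      (∀ j : Fin (m + 1), (j : ℕ) < m - k → u j = 0) →
      (Pi.single (Fin.last ℓ) (1 : ℂ)) ⊗ₜ[ℂ] (Pi.single (Fin.last m) (1 : ℂ)) ∈ W := by
  intro k
  induction k with
  | zero =>
      intro u hu0 huW hvan
      have hulast : u (Fin.last m) ≠ 0 := by
        intro h
        apply hu0
        funext j
        by_cases hj : j = Fin.last m
        · rw [hj, h]; rfl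
        · have hjm : (j : ℕ) < m := by
            have h1 : (j : ℕ) ≠ m := fun hh => hj (Fin.ext hh)
            have h2 := j.isLt
            omega
          rw [hvan j (by omega)]; rfl
      have hu : u = u (Fin.last m) • (Pi.single (Fin.last m) (1 : ℂ) : Fin (m + 1) → ℂ) := by
        funext j
        by_cases hj : j = Fin.last m
        · subst hj; simp
        · have hjm : (j : ℕ) < m := by
            have h1 : (j : ℕ) ≠ m := fun hh => hj (Fin.ext hh)
            have h2 := j.isLt
            omega
          rw [hvan j (by omega)]
          simp [Pi.single_apply, hj]
      rw [hu, TensorProduct.tmul_smul] at huW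
      have hmem := W.smul_mem (u (Fin.last m))⁻¹ huW
      rwa [smul_smul, inv_mul_cancel₀ hulast, one_smul] at hmem
  | succ k ih =>
      intro u hu0 huW hvan
      by_cases hall : ∀ j : Fin (m + 1), (j : ℕ) < m - k → u j = 0
      · exact ih u hu0 huW hall
      · push_neg at hall
        obtain ⟨j, hj, hne⟩ := hall
        have h1 : ¬ ((j : ℕ) < m - (k + 1)) := fun h => hne (hvan j h)
        have hkm : k < m := by omega
        set n : ℕ := m - k - 1 with hn_def
        have hn : n < m := by omega
        have hjeq : j = ⟨n, by omega⟩ := Fin.ext (show (j : ℕ) = n by omega)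
        have hu'W : (Pi.single (Fin.last ℓ) (1 : ℂ)) ⊗ₜ[ℂ] evalE1m q m u ∈ W := by
          rw [← dE1m_last_tmul]
          exact hE1m _ huW
        have hsucc := evalE1m_coord_succ (q := q) m n hn u
        have hu'ne : evalE1m q m u ≠ 0 := by
          intro h0
          rw [h0] at hsucc
          apply hne
          rw [hjeq]
          rcases mul_eq_zero.mp hsucc.symm with h | h
          · exact absurd h (qnum_succ_ne_zero hq0 hq n)
          · exact h
        have hvan' : ∀ p : Fin (m + 1), (p : ℕ) < m - k → evalE1m q m u p = 0 := by
          intro p hp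
          rcases Nat.eq_zero_or_pos (p : ℕ) with h0 | hpos
          · have : p = ⟨0, by omega⟩ := Fin.ext h0
            rw [this]
            exact evalE1m_coord_zero m u
          · obtain ⟨pp, hpp⟩ : ∃ pp, (p : ℕ) = pp + 1 := ⟨(p : ℕ) - 1, by omega⟩
            have hppm : pp < m := by omega
            have : p = ⟨pp + 1, by omega⟩ := Fin.ext hpp
            rw [this, evalE1m_coord_succ (q := q) m pp hppm u,
              hvan ⟨pp, by omega⟩ (show pp < m - (k + 1) by omega), mul_zero]
        exact ih _ hu'ne hu'W hvan'

end Main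
/-- every nonzero invariant subspace of `V(ℓ,a) ⊗ V(m)` contains the
lowest weight vector `x̃_{ℓ+m} = [ℓ]! [m]! v_ℓ ⊗ v'_m`. -/
theorem stmt15 (q : ℂ) (hq0 : q ≠ 0) (hq : ∀ n : ℕ, 0 < n → q ^ n ≠ 1)
    (ℓ m : ℕ) (hℓ : 1 ≤ ℓ) (hm : 1 ≤ m) (a : ℂ) (ha : a ≠ 0)
    (W : Submodule ℂ (TensorProduct ℂ (Fin (ℓ + 1) → ℂ) (Fin (m + 1) → ℂ)))
    (hW : W ≠ ⊥)
    (hE0 : ∀ v ∈ W, dE0 q ℓ m a 0 v ∈ W)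
    (hE1p : ∀ v ∈ W, dE1p q ℓ m v ∈ W)
    (hE1m : ∀ v ∈ W, dE1m q ℓ m v ∈ W)
    (hK0 : ∀ v ∈ W, dK0 q ℓ m v ∈ W)
    (hK1 : ∀ v ∈ W, dK1 q ℓ m v ∈ W) :
    (qfac q ℓ * qfac q m) •
      (Pi.single (Fin.last ℓ) (1 : ℂ) ⊗ₜ[ℂ] Pi.single (Fin.last m) (1 : ℂ)) ∈ W := by
  obtain ⟨w, hwW, hw0⟩ := (Submodule.ne_bot_iff W).mp hW
  obtain ⟨u, hu0, huW⟩ := step2 hq0 hq ℓ m a ha W hE0 ℓ w hwW hw0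
    (fun i hi => absurd hi (by omega))
  exact W.smul_mem _ (step3 hq0 hq ℓ m W hE1m m u hu0 huW
    (fun j hj => absurd hj (by omega)))

end
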